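/- Let c, c₁ > 0 and let X ∈ [0,1) satisfy X < c²/n² for an integer n ≥ c(1+c₁). Then ∫₀^X (X - y)²/(1-y)^{5/2} dy ≤ (2/3) X² [ (c₁+1)³ / (c₁(c₁+2))^{3/2} − 1 ]. -/
import Mathlib


open Real

theorem remainder_integral_bound (c c₁ X : ℝ) (n : ℤ)
    (hc : 0 < c) (hc₁ : 0 < c₁) (hX0 : 0 ≤ X) (hX1 : X < 1)
    (hXn : X < c ^ 2 / (n : ℝ) ^ 2) (hn : c * (1 + c₁) ≤ (n : ℝ)) :
    ∫ y in (0:ℝ)..X, (X - y) ^ 2 / (1 - y) ^ ((5:ℝ)/2) ≤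
      (2/3) * X ^ 2 * ((c₁ + 1) ^ 3 / (c₁ * (c₁ + 2)) ^ ((3:ℝ)/2) - 1) := by
  have hn0 : (0:ℝ) < (n : ℝ) := lt_of_lt_of_le (by positivity) hn
  have h1X : 0 < 1 - X := by linarith
  have hXle : X ≤ 1 / (1 + c₁) ^ 2 := by
    have h1 : c ^ 2 * (1 + c₁) ^ 2 ≤ (n:ℝ) ^ 2 := by
      have := mul_le_mul hn hn (by positivity) hn0.le
      nlinarith
    have h2 : c ^ 2 / (n:ℝ) ^ 2 ≤ 1 / (1 + c₁) ^ 2 := by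
      rw [div_le_div_iff₀ (by positivity) (by positivity)]
      nlinarith
    linarith
  have hXle' : X * (1 + c₁) ^ 2 ≤ 1 := by
    have := (le_div_iff₀ (by positivity : (0:ℝ) < (1 + c₁) ^ 2)).mp hXle
    linarith
  have hkey : 1 / (1 - X) ≤ (c₁ + 1) ^ 2 / (c₁ * (c₁ + 2)) := by
    rw [div_le_div_iff₀ h1X (by positivity)]
    nlinarith [hXle']
  -- continuity facts
  have hden : ∀ y ∈ Set.Icc (0:ℝ) X, (0:ℝ) < 1 - y := by
    intro y hy; have := hy.2; linarith
  have hcont : ContinuousOn (fun y : ℝ => (1 - y) ^ ((5:ℝ)/2)) (Set.Icc 0 X) := by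
    apply ContinuousOn.rpow_const (by fun_prop)
    intro y hy; exact Or.inr (by norm_num)
  have hdenne : ∀ y ∈ Set.Icc (0:ℝ) X, (1 - y) ^ ((5:ℝ)/2) ≠ 0 := by
    intro y hy; exact (rpow_pos_of_pos (hden y hy) _).ne'
  have hint1 : IntervalIntegrable (fun y : ℝ => (X - y) ^ 2 / (1 - y) ^ ((5:ℝ)/2))
      MeasureTheory.volume 0 X := by
    apply ContinuousOn.intervalIntegrable
    rw [Set.uIcc_of_le hX0]
    exact (ContinuousOn.pow (by fun_prop) 2).div hcont hdenne
  have hint2 : IntervalIntegrable (fun y : ℝ => X ^ 2 / (1 - y) ^ ((5:ℝ)/2))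
      MeasureTheory.volume 0 X := by
    apply ContinuousOn.intervalIntegrable
    rw [Set.uIcc_of_le hX0]
    exact continuousOn_const.div hcont hdenne
  have hmono : (∫ y in (0:ℝ)..X, (X - y) ^ 2 / (1 - y) ^ ((5:ℝ)/2)) ≤
      ∫ y in (0:ℝ)..X, X ^ 2 / (1 - y) ^ ((5:ℝ)/2) := by
    apply intervalIntegral.integral_mono_on hX0 hint1 hint2
    intro y hy
    have h1 := hden y hy
    have h2 : (X - y) ^ 2 ≤ X ^ 2 := by nlinarith [hy.1, hy.2]
    exact (div_le_div_iff_of_pos_right (rpow_pos_of_pos h1 ((5:ℝ)/2))).mpr h2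
  -- compute the majorant integral
  have hcalc : (∫ y in (0:ℝ)..X, X ^ 2 / (1 - y) ^ ((5:ℝ)/2)) =
      X ^ 2 * ((2/3) * ((1 - X) ^ (-((3:ℝ)/2)) - 1)) := by
    have hcg : (∫ y in (0:ℝ)..X, X ^ 2 / (1 - y) ^ ((5:ℝ)/2)) =
        ∫ y in (0:ℝ)..X, X ^ 2 * ((fun u : ℝ => u ^ (-((5:ℝ)/2))) (1 - y)) := by
      apply intervalIntegral.integral_congr
      intro y hy
      rw [Set.uIcc_of_le hX0] at hy
      have h1 := hden y hy
      simp only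
      rw [div_eq_mul_inv, Real.rpow_neg h1.le]
    rw [hcg, intervalIntegral.integral_const_mul,
      intervalIntegral.integral_comp_sub_left (fun u : ℝ => u ^ (-((5:ℝ)/2))) 1]
    simp only [sub_zero]
    rw [integral_rpow (Or.inr ⟨by norm_num, by
      intro hmem
      rw [Set.uIcc_of_le (by linarith)] at hmem
      exact absurd hmem.1 (by linarith)⟩)]
    rw [one_rpow]
    rw [show (-((5:ℝ)/2)) + 1 = -((3:ℝ)/2) by norm_num]
    ring
  have hfinal : (1 - X) ^ (-((3:ℝ)/2)) ≤ (c₁ + 1) ^ 3 / (c₁ * (c₁ + 2)) ^ ((3:ℝ)/2) := by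
    have h1 : (1 - X) ^ (-((3:ℝ)/2)) = (1 / (1 - X)) ^ ((3:ℝ)/2) := by
      rw [show (-((3:ℝ)/2)) = (-1) * ((3:ℝ)/2) by ring, Real.rpow_mul h1X.le,
        Real.rpow_neg_one, one_div]
    have h2 : (c₁ + 1) ^ 3 / (c₁ * (c₁ + 2)) ^ ((3:ℝ)/2) =
        ((c₁ + 1) ^ 2 / (c₁ * (c₁ + 2))) ^ ((3:ℝ)/2) := by
      rw [Real.div_rpow (by positivity) (by positivity)]
      congr 1
      rw [← Real.rpow_natCast (c₁ + 1) 2, ← Real.rpow_mul (by positivity),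
        ← Real.rpow_natCast (c₁ + 1) 3]
      norm_num
    rw [h1, h2]
    exact Real.rpow_le_rpow (by positivity) hkey (by norm_num)
  calc (∫ y in (0:ℝ)..X, (X - y) ^ 2 / (1 - y) ^ ((5:ℝ)/2))
      ≤ ∫ y in (0:ℝ)..X, X ^ 2 / (1 - y) ^ ((5:ℝ)/2) := hmono
    _ = X ^ 2 * ((2/3) * ((1 - X) ^ (-((3:ℝ)/2)) - 1)) := hcalc
    _ ≤ (2/3) * X ^ 2 * ((c₁ + 1) ^ 3 / (c₁ * (c₁ + 2)) ^ ((3:ℝ)/2) - 1) := by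
        nlinarith [sq_nonneg X, hfinal]
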